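/- Monotonicity of the weights across scales for monomials of degree ≥ 6 with no low unpaired frequency. Under the standing parameter conventions, define Λ_α := {𝐧 ∈ 𝔑∖𝔍 : 𝐧₋ < N_α}. For every α ≥ 0 and every 𝐧 ∈ 𝔑∖Λ_{α+1} with deg(𝐧) ≥ 6, one has w⁰_𝐧(α) ≤ w⁰_𝐧(α+1) and w¹_𝐧(α) ≤ w¹_𝐧(α+1). -/
import Mathlib


open scoped BigOperators
open Finset

namespace NLSPaper

/-- `ℤ^d`. -/
abbrev Zd (d : ℕ) := Fin d → ℤ

/-- Euclidean norm `|n|` of a lattice point. -/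
noncomputable def enorm {d : ℕ} (n : Zd d) : ℝ :=
  Real.sqrt (∑ i, ((n i : ℝ)) ^ 2)

/-- Japanese bracket `⟨n⟩ = (1+|n|²)^{1/2}`. -/
noncomputable def jap {d : ℕ} (n : Zd d) : ℝ :=
  Real.sqrt (1 + ∑ i, ((n i : ℝ)) ^ 2)

/-- `‖u‖_{h^s}²`. -/
noncomputable def hsNormSq {d : ℕ} (s : ℝ) (u : Zd d → ℂ) : ℝ :=
  ∑' n : Zd d, jap n ^ (2 * s) * ‖u n‖ ^ 2

/-- `‖u‖_{h^s}`. -/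
noncomputable def hsNorm {d : ℕ} (s : ℝ) (u : Zd d → ℂ) : ℝ :=
  Real.sqrt (hsNormSq s u)

/-- Membership in `h^s`. -/
def MemHs {d : ℕ} (s : ℝ) (u : Zd d → ℂ) : Prop :=
  Summable fun n : Zd d => jap n ^ (2 * s) * ‖u n‖ ^ 2

/-- `‖u‖_{ℓ¹}`. -/
noncomputable def l1Norm {d : ℕ} (u : Zd d → ℂ) : ℝ := ∑' n : Zd d, ‖u n‖

/-- `‖u‖_{ℓ¹_σ}`. -/
noncomputable def l1sNorm {d : ℕ} (σ : ℝ) (u : Zd d → ℂ) : ℝ :=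
  ∑' n : Zd d, jap n ^ σ * ‖u n‖

/-- Membership in `ℓ¹`. -/
def MemL1 {d : ℕ} (u : Zd d → ℂ) : Prop := Summable fun n : Zd d => ‖u n‖

/-- Projection `Π_𝒜` (restriction to `𝒜`, extension by `0`). -/
noncomputable def proj {d : ℕ} (A : Set (Zd d)) (u : Zd d → ℂ) : Zd d → ℂ :=
  A.indicator u

/-- `Π_M`, restriction to `{|n| ≤ M}`. -/
noncomputable def projLE {d : ℕ} (M : ℝ) (u : Zd d → ℂ) : Zd d → ℂ :=
  proj {n | enorm n ≤ M} u

/-- `Π_{≥N}`, restriction to `{|n| ≥ N}`. -/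
noncomputable def projGE {d : ℕ} (N : ℝ) (u : Zd d → ℂ) : Zd d → ℂ :=
  proj {n | N ≤ enorm n} u

/-- A multi-index `𝐧 = (𝐤, 𝐥, 𝐦)` with the non-pairing condition `k_n ℓ_n = 0`. -/
structure MultiIdx (d : ℕ) where
  kk : Zd d →₀ ℕ
  ll : Zd d →₀ ℕ
  mm : Zd d →₀ ℕ
  nonpair : ∀ n, kk n * ll n = 0

namespace MultiIdx

/-- Swap `𝐤` and `𝐥`. -/
def swap {d : ℕ} (I : MultiIdx d) : MultiIdx d :=
  ⟨I.ll, I.kk, I.mm, fun n => by rw [Nat.mul_comm]; exact I.nonpair n⟩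

/-- Decrease `𝐤` by one at `k`. -/
noncomputable def subK {d : ℕ} (I : MultiIdx d) (k : Zd d) : MultiIdx d where
  kk := I.kk - Finsupp.single k 1
  ll := I.ll
  mm := I.mm
  nonpair := fun n => by
    rcases Nat.mul_eq_zero.mp (I.nonpair n) with h | h
    · refine Nat.mul_eq_zero.mpr (Or.inl ?_)
      rw [Finsupp.tsub_apply]
      omega
    · exact Nat.mul_eq_zero.mpr (Or.inr h)

/-- Decrease `𝐥` by one at `k`. -/
noncomputable def subL {d : ℕ} (I : MultiIdx d) (k : Zd d) : MultiIdx d where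
  kk := I.kk
  ll := I.ll - Finsupp.single k 1
  mm := I.mm
  nonpair := fun n => by
    rcases Nat.mul_eq_zero.mp (I.nonpair n) with h | h
    · exact Nat.mul_eq_zero.mpr (Or.inl h)
    · refine Nat.mul_eq_zero.mpr (Or.inr ?_)
      rw [Finsupp.tsub_apply]
      omega

/-- Decrease `𝐦` by one at `k`. -/
noncomputable def subM {d : ℕ} (I : MultiIdx d) (k : Zd d) : MultiIdx d where
  kk := I.kk
  ll := I.ll
  mm := I.mm - Finsupp.single k 1
  nonpair := I.nonpair

/-- Total degree `Σ (2m_n + k_n + ℓ_n)`. -/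
def deg {d : ℕ} (I : MultiIdx d) : ℕ :=
  (I.kk.sum fun _ e => e) + (I.ll.sum fun _ e => e) + 2 * (I.mm.sum fun _ e => e)

/-- Zero momentum conditions (membership in `𝔑`). -/
def IsMom {d : ℕ} (I : MultiIdx d) : Prop :=
  ((I.kk.sum fun _ e => (e : ℤ)) = I.ll.sum fun _ e => (e : ℤ)) ∧
  ((I.kk.sum fun n e => (e : ℤ) • n) = I.ll.sum fun n e => (e : ℤ) • n)

/-- Support in `{|n| ≤ M}` (membership in the multi-indices over `ℤ^d_M`). -/
def SuppIn {d : ℕ} (M : ℝ) (I : MultiIdx d) : Prop :=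
  ∀ n : Zd d, ¬ enorm n ≤ M → I.kk n = 0 ∧ I.ll n = 0 ∧ I.mm n = 0

/-- `𝐧₋`, the size of the smallest unpaired frequency. -/
noncomputable def nminus {d : ℕ} (I : MultiIdx d) : ℝ :=
  sInf (enorm '' {n | 1 ≤ I.kk n + I.ll n})

/-- Integrable multi-indices (`𝐤 = 𝐥 = 0`, i.e. membership in `𝔍`). -/
def Integrable {d : ℕ} (I : MultiIdx d) : Prop := I.kk = 0 ∧ I.ll = 0

end MultiIdx

/-- The re-centered monomial `z_𝐧(u, y) = ∏ u_n^{k_n} ū_n^{ℓ_n} y_n^{m_n}`. -/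
noncomputable def zMono {d : ℕ} (I : MultiIdx d) (u : Zd d → ℂ) (y : Zd d → ℝ) : ℂ :=
  (I.kk.prod fun n e => u n ^ e) * (I.ll.prod fun n e => (starRingEnd ℂ) (u n) ^ e) *
    (I.mm.prod fun n e => ((y n : ℂ)) ^ e)

/-- The weight `D(α) = η^{−2−1/5} N_α^{2s}`. -/
noncomputable def Dw (s η Nα : ℝ) : ℝ := η ^ (-(2 + 1/5) : ℝ) * Nα ^ (2 * s)

/-- The weight `C_n(α) = η^{−1} min(|n|, N_α)^s N_α^τ`. -/
noncomputable def Cw {d : ℕ} (s τ η Nα : ℝ) (n : Zd d) : ℝ :=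
  η⁻¹ * (min (enorm n) Nα) ^ s * Nα ^ τ

/-- The weight `w⁰_𝐧(α)`. -/
noncomputable def weight0 {d : ℕ} (s τ η Nα : ℝ) (I : MultiIdx d) : ℝ :=
  Nα ^ (-(6 * s)) * η ^ (6 : ℕ) *
    ((I.mm.prod fun _ e => Dw s η Nα ^ e) *
      (I.kk.prod fun n e => Cw s τ η Nα n ^ e) *
      (I.ll.prod fun n e => Cw s τ η Nα n ^ e))

/-- The weight `w¹_𝐧(α)`. -/
noncomputable def weight1 {d : ℕ} (s τ η Nα : ℝ) (I : MultiIdx d) : ℝ :=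
  Nα ^ (-(4 * s)) * η ^ (4 : ℕ) *
    ((I.mm.prod fun _ e => Dw s η Nα ^ e) *
      (I.kk.prod fun n e => Cw s τ η Nα n ^ e) *
      (I.ll.prod fun n e => Cw s τ η Nα n ^ e))

/-- The parameter `η = ε^{1 − 1/100}`. -/
noncomputable def Eta (ε : ℝ) : ℝ := ε ^ ((1 : ℝ) - 1/100)

/-- The frequency scale `N_α = ε^{−α/(200 s)}`. -/
noncomputable def NNs (ε s : ℝ) (α : ℕ) : ℝ := ε ^ (-((α : ℝ) / (200 * s)))

/-- The parameter `τ = s/(10³ r)`. -/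
noncomputable def tauP (s : ℝ) (r : ℕ) : ℝ := s / (1000 * r)

/-- The set of internal parameters `𝒰_s(ε)` (supported on `ℤ^d_M`). -/
def UU (d : ℕ) (s ε M : ℝ) : Set (Zd d → ℝ) :=
  {ξ | (∀ n, ¬ enorm n ≤ M → ξ n = 0) ∧
    Summable (fun n : Zd d => jap n ^ (2 * s) * |ξ n|) ∧
    ∑' n : Zd d, jap n ^ (2 * s) * |ξ n| < 400 * ε ^ 2}

/-- The annulus `𝒱_{α,s}(ε', ξ)` (at frequency scale `Nα`). -/
def VV (d : ℕ) (s ε' Nα M : ℝ) (ξ : Zd d → ℝ) : Set (Zd d → ℂ) :=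
  {u | (∀ n, ¬ enorm n ≤ M → u n = 0) ∧ hsNorm s u < ε' ∧
    Summable (fun n : Zd d => jap n ^ (2 * s) * |‖u n‖ ^ 2 - ξ n|) ∧
    ∑' n : Zd d, jap n ^ (2 * s) * |‖u n‖ ^ 2 - ξ n| ≤
      ε' ^ ((2 : ℝ) + 1/5) * Nα ^ (-(2 * s))}

private lemma weight_core_mono {d : ℕ} (s τ η N N' : ℝ) (hη : 0 < η) (hs : 0 < s)
    (hτ : 0 ≤ τ) (hN1 : 1 ≤ N) (hNN : N ≤ N') (I : MultiIdx d)
    (H : ∀ n : Zd d, 1 ≤ I.kk n + I.ll n → N' ≤ enorm n)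
    (b : ℕ) (hb : b ≤ I.deg) :
    N ^ (-((b : ℝ) * s)) * η ^ b *
      ((I.mm.prod fun _ e => Dw s η N ^ e) *
        (I.kk.prod fun n e => Cw s τ η N n ^ e) *
        (I.ll.prod fun n e => Cw s τ η N n ^ e)) ≤
    N' ^ (-((b : ℝ) * s)) * η ^ b *
      ((I.mm.prod fun _ e => Dw s η N' ^ e) *
        (I.kk.prod fun n e => Cw s τ η N' n ^ e) *
        (I.ll.prod fun n e => Cw s τ η N' n ^ e)) := by
  have hN0 : (0 : ℝ) < N := lt_of_lt_of_le one_pos hN1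
  have hN'0 : (0 : ℝ) < N' := lt_of_lt_of_le hN0 hNN
  rw [MultiIdx.deg] at hb
  set K : ℕ := I.kk.sum fun _ e => e with hK
  set L : ℕ := I.ll.sum fun _ e => e with hL
  set Mm : ℕ := I.mm.sum fun _ e => e with hMm
  -- the m-product
  have hmmP : ∀ X : ℝ, (I.mm.prod fun _ e => Dw s η X ^ e) = Dw s η X ^ Mm := by
    intro X
    rw [hMm, Finsupp.prod, Finsupp.sum, Finset.prod_pow_eq_pow_sum]
  -- the k/l-products
  have hgen : ∀ (f : Zd d →₀ ℕ), (∀ n, f n ≠ 0 → 1 ≤ I.kk n + I.ll n) → ∀ X : ℝ, X ≤ N' →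
      (f.prod fun n e => Cw s τ η X n ^ e) = (η⁻¹ * X ^ s * X ^ τ) ^ (f.sum fun _ e => e) := by
    intro f hf X hX
    rw [Finsupp.prod, Finsupp.sum, ← Finset.prod_pow_eq_pow_sum]
    refine Finset.prod_congr rfl fun n hn => ?_
    have h1 : 1 ≤ I.kk n + I.ll n := hf n (Finsupp.mem_support_iff.mp hn)
    have h2 : X ≤ enorm n := hX.trans (H n h1)
    rw [Cw, min_eq_right h2]
  have hkk : ∀ n, I.kk n ≠ 0 → 1 ≤ I.kk n + I.ll n := fun n h => by omega
  have hll : ∀ n, I.ll n ≠ 0 → 1 ≤ I.kk n + I.ll n := fun n h => by omega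
  -- expansion of the whole expression as (η-part) * X ^ e
  set e : ℝ := -((b : ℝ) * s) + 2 * s * (Mm : ℝ) + (s + τ) * ((K + L : ℕ) : ℝ) with he
  have expand : ∀ X : ℝ, 0 < X →
      X ^ (-((b : ℝ) * s)) * η ^ b *
        (Dw s η X ^ Mm * (η⁻¹ * X ^ s * X ^ τ) ^ K * (η⁻¹ * X ^ s * X ^ τ) ^ L) =
      (η ^ b * (η ^ (-(2 + 1/5) : ℝ)) ^ Mm * η⁻¹ ^ K * η⁻¹ ^ L) * X ^ e := by
    intro X hX
    have h1 : X ^ e =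
        X ^ (-((b : ℝ) * s)) * (X ^ (2 * s)) ^ Mm * ((X ^ s * X ^ τ) ^ (K + L)) := by
      rw [he, Real.rpow_add hX, Real.rpow_add hX, Real.rpow_mul hX.le (2 * s) ((Mm : ℕ) : ℝ),
        Real.rpow_mul hX.le (s + τ) (((K + L : ℕ)) : ℝ),
        Real.rpow_natCast, Real.rpow_natCast, Real.rpow_add hX]
    rw [h1, Dw]
    ring
  -- the exponent is nonnegative
  have hbe : (0 : ℝ) ≤ e := by
    have hb' : (b : ℝ) ≤ (K : ℝ) + (L : ℝ) + 2 * (Mm : ℝ) := by exact_mod_cast hb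
    have hKL : (0 : ℝ) ≤ (K : ℝ) + (L : ℝ) := by positivity
    rw [he]
    push_cast
    nlinarith [mul_nonneg hτ hKL, hs.le]
  -- compare
  rw [hmmP N, hmmP N', hgen I.kk hkk N (hNN), hgen I.kk hkk N' le_rfl,
    hgen I.ll hll N (hNN), hgen I.ll hll N' le_rfl, ← hK, ← hL,
    expand N hN0, expand N' hN'0]
  have hE : 0 ≤ η ^ b * (η ^ (-(2 + 1/5) : ℝ)) ^ Mm * η⁻¹ ^ K * η⁻¹ ^ L := by positivity
  exact mul_le_mul_of_nonneg_left (Real.rpow_le_rpow hN0.le hNN hbe) hE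

/-- **Monotonicity of the weights across scales** (Lemma 4.6): for `𝐧 ∈ 𝔑 ∖ Λ_{α+1}`
with `deg 𝐧 ≥ 6`, the weights `w⁰` and `w¹` are nondecreasing from scale `α`
to scale `α+1`. Here `Λ_{α+1} = {𝐧 ∈ 𝔑 ∖ 𝔍 : 𝐧₋ < N_{α+1}}`. -/
theorem weight_monotone_scales (d r : ℕ) (hd : 1 ≤ d) (hr : 9 ≤ r)
    (s : ℝ) (hs : 0 < s) (ε : ℝ) (hε : 0 < ε) (hε1 : ε < 1)
    (M : ℝ) (hM : 2 ≤ M) (α : ℕ) (I : MultiIdx d)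
    (hmom : I.IsMom) (hsupp : I.SuppIn M)
    (hnotLam : ¬ (¬ I.Integrable ∧ I.nminus < NNs ε s (α + 1)))
    (hdeg : 6 ≤ I.deg) :
    weight0 s (tauP s r) (Eta ε) (NNs ε s α) I
      ≤ weight0 s (tauP s r) (Eta ε) (NNs ε s (α + 1)) I ∧
    weight1 s (tauP s r) (Eta ε) (NNs ε s α) I
      ≤ weight1 s (tauP s r) (Eta ε) (NNs ε s (α + 1)) I := by
  have hη : 0 < Eta ε := Real.rpow_pos_of_pos hε _
  have h200s : (0:ℝ) < 200 * s := by linarith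
  have hτ : 0 ≤ tauP s r := div_nonneg hs.le (by positivity)
  have hN1 : 1 ≤ NNs ε s α :=
    Real.one_le_rpow_of_pos_of_le_one_of_nonpos hε hε1.le
      (neg_nonpos.mpr (div_nonneg (Nat.cast_nonneg _) h200s.le))
  have hNN : NNs ε s α ≤ NNs ε s (α + 1) := by
    apply Real.rpow_le_rpow_of_exponent_ge hε hε1.le
    push_cast
    rw [neg_le_neg_iff, div_le_div_iff₀ h200s h200s]
    nlinarith [h200s, (Nat.cast_nonneg α : (0:ℝ) ≤ (α : ℝ))]
  have H : ∀ n : Zd d, 1 ≤ I.kk n + I.ll n → NNs ε s (α + 1) ≤ enorm n := by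
    intro n hn
    by_cases hInt : I.Integrable
    · exfalso
      have h1 : I.kk n = 0 := by rw [hInt.1]; rfl
      have h2 : I.ll n = 0 := by rw [hInt.2]; rfl
      omega
    · have h2 : NNs ε s (α + 1) ≤ I.nminus :=
        not_lt.mp fun h => hnotLam ⟨hInt, h⟩
      have hbdd : BddBelow (enorm '' {m : Zd d | 1 ≤ I.kk m + I.ll m}) := by
        refine ⟨0, fun x hx => ?_⟩
        obtain ⟨m, -, rfl⟩ := hx
        exact Real.sqrt_nonneg _
      have h3 : I.nminus ≤ enorm n := csInf_le hbdd ⟨n, hn, rfl⟩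
      linarith
  constructor
  · have h := weight_core_mono s (tauP s r) (Eta ε) _ _ hη hs hτ hN1 hNN I H 6 hdeg
    simpa [weight0] using h
  · have h := weight_core_mono s (tauP s r) (Eta ε) _ _ hη hs hτ hN1 hNN I H 4
      (le_trans (by norm_num) hdeg)
    simpa [weight1] using h

end NLSPaper
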